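/- Let d_A, d_M, d_B ≥ 1 and N ≥ 1 be natural numbers. For j = 1, …, N let U_{A,j} be a unitary complex matrix indexed by Fin d_A × Fin d_M and U_{B,j} a unitary complex matrix indexed by Fin d_M × Fin d_B. Let e₀ denote the standard basis vector of ℂ^{d_A·d_M·d_B} (indexed by Fin d_A × Fin d_M × Fin d_B) at index (0,0,0), and set ψ_N = (I_A ⊗ U_{B,N})·(U_{A,N} ⊗ I_B)⋯(I_A ⊗ U_{B,1})·(U_{A,1} ⊗ I_B)·e₀. Let Π_A be a Hermitian idempotent d_A × d_A matrix and Π_B a Hermitian idempotent d_B × d_B matrix such that (Π_A ⊗ I_M ⊗ I_B)·ψ_N = (I_A ⊗ I_M ⊗ Π_B)·ψ_N. Suppose there exist positive semidefinite matrices Z_{A,0}, …, Z_{A,N} of size d_A × d_A with Z_{A,N} = Π_A and U_{A,j+1}†·(Z_{A,j+1} ⊗ I_M)·U_{A,j+1} ⪯ Z_{A,j} ⊗ I_M for 0 ≤ j ≤ N−1, and positive semidefinite matrices Z_{B,0}, …, Z_{B,N} of size d_B × d_B with Z_{B,N} = Π_B and U_{B,j+1}†·(I_M ⊗ Z_{B,j+1})·U_{B,j+1}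 ⪯ I_M ⊗ Z_{B,j} for 0 ≤ j ≤ N−1. Then Re((Z_{A,0})_{0,0}) · Re((Z_{B,0})_{0,0}) ≥ ‖(Π_A ⊗ I_M ⊗ I_B)·ψ_N‖². (Certificate form of Kitaev's bound p_{1*}·p_{*1} ≥ p_1 for two-party coin flipping.) -/

import Mathlib

open Matrix Kronecker
open scoped ComplexOrder

/-- The triple Kronecker product `A ⊗ B ⊗ C` on `ℂ^{d_A} ⊗ ℂ^{d_M} ⊗ ℂ^{d_B}`. -/
noncomputable def tk {dA dM dB : ℕ} (A : Matrix (Fin dA) (Fin dA) ℂ)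
    (B : Matrix (Fin dM) (Fin dM) ℂ) (C : Matrix (Fin dB) (Fin dB) ℂ) :
    Matrix (Fin dA × Fin dM × Fin dB) (Fin dA × Fin dM × Fin dB) ℂ :=
  fun p q => A p.1 q.1 * B p.2.1 q.2.1 * C p.2.2 q.2.2

/-- The extension `U ⊗ I_B` of a matrix `U` on `ℂ^{d_A} ⊗ ℂ^{d_M}`. -/
noncomputable def extA {dA dM : ℕ} (dB : ℕ)
    (U : Matrix (Fin dA × Fin dM) (Fin dA × Fin dM) ℂ) :
    Matrix (Fin dA × Fin dM × Fin dB) (Fin dA × Fin dM × Fin dB) ℂ :=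
  fun p q => if p.2.2 = q.2.2 then U (p.1, p.2.1) (q.1, q.2.1) else 0

/-- The extension `I_A ⊗ U` of a matrix `U` on `ℂ^{d_M} ⊗ ℂ^{d_B}`. -/
noncomputable def extB (dA : ℕ) {dM dB : ℕ}
    (U : Matrix (Fin dM × Fin dB) (Fin dM × Fin dB) ℂ) :
    Matrix (Fin dA × Fin dM × Fin dB) (Fin dA × Fin dM × Fin dB) ℂ :=
  fun p q => if p.1 = q.1 then U p.2 q.2 else 0

section KitaevAux
set_option linter.unusedSectionVars false

variable {m n : Type*} [Fintype m] [Fintype n] [DecidableEq m] [DecidableEq n]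

lemma kron_conjT (A : Matrix m m ℂ) (B : Matrix n n ℂ) :
    (A ⊗ₖ B)ᴴ = Aᴴ ⊗ₖ Bᴴ := by
  ext p q
  simp [conjTranspose_apply, kroneckerMap_apply, star_mul', mul_comm]

lemma kron_psd {A : Matrix m m ℂ} {B : Matrix n n ℂ}
    (hA : A.PosSemidef) (hB : B.PosSemidef) : (A ⊗ₖ B).PosSemidef := by
  open scoped MatrixOrder in
  obtain ⟨X, rfl⟩ : ∃ X, _ = Xᴴ * X := CStarAlgebra.nonneg_iff_eq_star_mul_self.mp hA.nonneg
  open scoped MatrixOrder in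
  obtain ⟨Y, rfl⟩ : ∃ Y, _ = Yᴴ * Y := CStarAlgebra.nonneg_iff_eq_star_mul_self.mp hB.nonneg
  rw [mul_kronecker_mul, ← kron_conjT]
  exact posSemidef_conjTranspose_mul_self _

lemma psd_submatrix {M : Matrix n n ℂ} (h : M.PosSemidef) (e : m ≃ n) :
    (M.submatrix e e).PosSemidef := by
  open scoped MatrixOrder in
  obtain ⟨B, rfl⟩ : ∃ B, M = Bᴴ * B := CStarAlgebra.nonneg_iff_eq_star_mul_self.mp h.nonneg
  have key : (Bᴴ * B).submatrix e e
      = (B.submatrix (id : n → n) (e : m → n))ᴴ * B.submatrix (id : n → n) e := by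
    rw [conjTranspose_submatrix]
    exact (submatrix_mul Bᴴ B (e : m → n) (id : n → n) (e : m → n)
      Function.bijective_id).symm ▸ rfl
  rw [key]
  exact posSemidef_conjTranspose_mul_self _

/-- The quadratic form of a matrix. -/
noncomputable def qf {k : Type*} [Fintype k] (M : Matrix k k ℂ) (x : k → ℂ) : ℂ :=
  star x ⬝ᵥ M.mulVec x

lemma qf_conj {k : Type*} [Fintype k] (M A : Matrix k k ℂ) (x : k → ℂ) :
    qf (Aᴴ * M * A) x = qf M (A.mulVec x) := by
  simp only [qf, star_mulVec, mulVec_mulVec, dotProduct_mulVec, vecMul_vecMul,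
    Matrix.mul_assoc]

lemma qf_mono {k : Type*} [Fintype k] {M N : Matrix k k ℂ} (h : (N - M).PosSemidef)
    (x : k → ℂ) : qf M x ≤ qf N x := by
  have h0 := h.dotProduct_mulVec_nonneg x
  rw [sub_mulVec, dotProduct_sub] at h0
  exact sub_nonneg.mp h0

lemma qf_basis {k : Type*} [Fintype k] [DecidableEq k] (M : Matrix k k ℂ) (i : k) :
    qf M (fun p => if p = i then 1 else 0) = M i i := by
  simp [qf, mulVec, dotProduct, apply_ite, mul_ite, ite_mul]

lemma kron_sub_left (A B : Matrix m m ℂ) (C : Matrix n n ℂ) :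
    (A - B) ⊗ₖ C = A ⊗ₖ C - B ⊗ₖ C := by
  ext p q; simp [kroneckerMap_apply, sub_mul]

lemma kron_sub_right (A : Matrix m m ℂ) (B C : Matrix n n ℂ) :
    A ⊗ₖ (B - C) = A ⊗ₖ B - A ⊗ₖ C := by
  ext p q; simp [kroneckerMap_apply, mul_sub]

end KitaevAux

section KitaevStruct
set_option linter.unusedSectionVars false
variable {dA dM dB : ℕ}

/-- Associativity equivalence for the triple product index type. -/
def es (dA dM dB : ℕ) : (Fin dA × Fin dM) × Fin dB ≃ Fin dA × Fin dM × Fin dB :=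
  Equiv.prodAssoc _ _ _

lemma tk_eq (A : Matrix (Fin dA) (Fin dA) ℂ) (B : Matrix (Fin dM) (Fin dM) ℂ)
    (C : Matrix (Fin dB) (Fin dB) ℂ) :
    tk A B C = ((A ⊗ₖ B) ⊗ₖ C).submatrix (es dA dM dB).symm (es dA dM dB).symm := by
  ext p q; rfl

lemma tk_assoc (A : Matrix (Fin dA) (Fin dA) ℂ) (B : Matrix (Fin dM) (Fin dM) ℂ)
    (C : Matrix (Fin dB) (Fin dB) ℂ) : tk A B C = A ⊗ₖ (B ⊗ₖ C) := by
  ext p q; simp [tk, kroneckerMap_apply, mul_assoc]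

lemma tk_conjT (A : Matrix (Fin dA) (Fin dA) ℂ) (B : Matrix (Fin dM) (Fin dM) ℂ)
    (C : Matrix (Fin dB) (Fin dB) ℂ) : (tk A B C)ᴴ = tk Aᴴ Bᴴ Cᴴ := by
  rw [tk_assoc, tk_assoc, kron_conjT, kron_conjT]

lemma extB_eq (U : Matrix (Fin dM × Fin dB) (Fin dM × Fin dB) ℂ) :
    extB dA U = (1 : Matrix (Fin dA) (Fin dA) ℂ) ⊗ₖ U := by
  ext p q; simp [extB, kroneckerMap_apply, one_apply, ite_mul]

lemma extA_eq (U : Matrix (Fin dA × Fin dM) (Fin dA × Fin dM) ℂ) :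
    extA dB U = (U ⊗ₖ (1 : Matrix (Fin dB) (Fin dB) ℂ)).submatrix
      (es dA dM dB).symm (es dA dM dB).symm := by
  ext p q
  simp [extA, es, Equiv.prodAssoc, kroneckerMap_apply, one_apply, mul_ite, mul_one, mul_zero]

lemma tk_mul (A A' : Matrix (Fin dA) (Fin dA) ℂ) (B B' : Matrix (Fin dM) (Fin dM) ℂ)
    (C C' : Matrix (Fin dB) (Fin dB) ℂ) :
    tk A B C * tk A' B' C' = tk (A * A') (B * B') (C * C') := by
  rw [tk_assoc, tk_assoc, tk_assoc, mul_kronecker_mul B B' C C', mul_kronecker_mul]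

lemma conjB (U : Matrix (Fin dM × Fin dB) (Fin dM × Fin dB) ℂ)
    (Z : Matrix (Fin dA) (Fin dA) ℂ) (W : Matrix (Fin dM × Fin dB) (Fin dM × Fin dB) ℂ) :
    (extB dA U)ᴴ * (Z ⊗ₖ W) * extB dA U = Z ⊗ₖ (Uᴴ * W * U) := by
  rw [extB_eq, kron_conjT, conjTranspose_one, ← mul_kronecker_mul, ← mul_kronecker_mul,
    one_mul, mul_one]

lemma conjA (U X : Matrix (Fin dA × Fin dM) (Fin dA × Fin dM) ℂ)
    (C : Matrix (Fin dB) (Fin dB) ℂ) :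
    (extA dB U)ᴴ * ((X ⊗ₖ C).submatrix (es dA dM dB).symm (es dA dM dB).symm) * extA dB U
      = ((Uᴴ * X * U) ⊗ₖ C).submatrix (es dA dM dB).symm (es dA dM dB).symm := by
  rw [extA_eq, conjTranspose_submatrix, submatrix_mul_equiv, submatrix_mul_equiv,
    kron_conjT, conjTranspose_one, ← mul_kronecker_mul, ← mul_kronecker_mul,
    one_mul, mul_one]

end KitaevStruct

/-- Certificate form of Kitaev's bound `p₁* · p*₁ ≥ p₁` for two-party coin
flipping: given dual-feasible sequences `Z_{A,j}`, `Z_{B,j}` for the two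
cheating SDPs, the product of their initial entries bounds the honest
probability of outcome 1 from below.  Here `χ j` is the honest state after
round `j` (rounds are indexed `0, …, N-1`, round `j` applying `U_{A,j}` then
`U_{B,j}`), and `Π_A`, `Π_B` are the final projections for outcome 1. -/
theorem stmt_8 (dA dM dB N : ℕ) (hdA : 0 < dA) (hdM : 0 < dM) (hdB : 0 < dB) (hN : 1 ≤ N)
    (UA : ℕ → Matrix (Fin dA × Fin dM) (Fin dA × Fin dM) ℂ)
    (UB : ℕ → Matrix (Fin dM × Fin dB) (Fin dM × Fin dB) ℂ)
    (hUA : ∀ j < N, UA j ∈ Matrix.unitaryGroup (Fin dA × Fin dM) ℂ)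
    (hUB : ∀ j < N, UB j ∈ Matrix.unitaryGroup (Fin dM × Fin dB) ℂ)
    (χ : ℕ → (Fin dA × Fin dM × Fin dB → ℂ))
    (hχ0 : χ 0 = fun p => if p = (⟨0, hdA⟩, ⟨0, hdM⟩, ⟨0, hdB⟩) then 1 else 0)
    (hχstep : ∀ j < N, χ (j + 1) =
      (extB dA (UB j)).mulVec ((extA dB (UA j)).mulVec (χ j)))
    (PA : Matrix (Fin dA) (Fin dA) ℂ) (PB : Matrix (Fin dB) (Fin dB) ℂ)
    (hPAh : PA.IsHermitian) (hPA2 : PA * PA = PA)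
    (hPBh : PB.IsHermitian) (hPB2 : PB * PB = PB)
    (hagree : (tk PA 1 1).mulVec (χ N) = (tk 1 1 PB).mulVec (χ N))
    (ZA : ℕ → Matrix (Fin dA) (Fin dA) ℂ) (ZB : ℕ → Matrix (Fin dB) (Fin dB) ℂ)
    (hZA : ∀ j ≤ N, (ZA j).PosSemidef) (hZB : ∀ j ≤ N, (ZB j).PosSemidef)
    (hZAN : ZA N = PA) (hZBN : ZB N = PB)
    (hZAstep : ∀ j < N, (ZA j ⊗ₖ (1 : Matrix (Fin dM) (Fin dM) ℂ) -
      (UA j)ᴴ * (ZA (j + 1) ⊗ₖ (1 : Matrix (Fin dM) (Fin dM) ℂ)) * UA j).PosSemidef)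
    (hZBstep : ∀ j < N, ((1 : Matrix (Fin dM) (Fin dM) ℂ) ⊗ₖ ZB j -
      (UB j)ᴴ * ((1 : Matrix (Fin dM) (Fin dM) ℂ) ⊗ₖ ZB (j + 1)) * UB j).PosSemidef) :
    (ZA 0 ⟨0, hdA⟩ ⟨0, hdA⟩).re * (ZB 0 ⟨0, hdB⟩ ⟨0, hdB⟩).re ≥
    (star ((tk PA 1 1).mulVec (χ N)) ⬝ᵥ ((tk PA 1 1).mulVec (χ N))).re := by
  classical
  set Φ : ℕ → ℂ := fun j => qf (tk (ZA j) 1 (ZB j)) (χ j) with hΦ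
  -- one-step monotonicity
  have step : ∀ j, j < N → Φ (j + 1) ≤ Φ j := by
    intro j hj
    have hZA1 := hZA (j + 1) (by omega)
    have hZBj := hZB j (by omega)
    set φ := (extA dB (UA j)).mulVec (χ j) with hφ
    have h1 : Φ (j + 1) = qf ((ZA (j + 1)) ⊗ₖ
        ((UB j)ᴴ * ((1 : Matrix (Fin dM) (Fin dM) ℂ) ⊗ₖ ZB (j + 1)) * UB j)) φ := by
      simp only [hΦ]
      rw [hχstep j hj, ← hφ, ← qf_conj, tk_assoc, conjB]
    have h2 : Φ (j + 1) ≤ qf (tk (ZA (j + 1)) 1 (ZB j)) φ := by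
      rw [h1, tk_assoc]
      refine qf_mono ?_ φ
      rw [← kron_sub_right]
      exact kron_psd hZA1 (hZBstep j hj)
    have h3 : qf (tk (ZA (j + 1)) 1 (ZB j)) φ
        = qf ((((UA j)ᴴ * (ZA (j + 1) ⊗ₖ (1 : Matrix (Fin dM) (Fin dM) ℂ)) * UA j)
            ⊗ₖ ZB j).submatrix (es dA dM dB).symm (es dA dM dB).symm) (χ j) := by
      rw [hφ, ← qf_conj, tk_eq, conjA]
    have h4 : qf ((((UA j)ᴴ * (ZA (j + 1) ⊗ₖ (1 : Matrix (Fin dM) (Fin dM) ℂ)) * UA j)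
            ⊗ₖ ZB j).submatrix (es dA dM dB).symm (es dA dM dB).symm) (χ j) ≤ Φ j := by
      simp only [hΦ]
      rw [tk_eq]
      refine qf_mono ?_ (χ j)
      have hds : ((ZA j ⊗ₖ (1 : Matrix (Fin dM) (Fin dM) ℂ)) ⊗ₖ ZB j).submatrix
            (es dA dM dB).symm (es dA dM dB).symm -
          (((UA j)ᴴ * (ZA (j + 1) ⊗ₖ (1 : Matrix (Fin dM) (Fin dM) ℂ)) * UA j)
            ⊗ₖ ZB j).submatrix (es dA dM dB).symm (es dA dM dB).symm
          = (((ZA j ⊗ₖ (1 : Matrix (Fin dM) (Fin dM) ℂ)) -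
              (UA j)ᴴ * (ZA (j + 1) ⊗ₖ (1 : Matrix (Fin dM) (Fin dM) ℂ)) * UA j)
            ⊗ₖ ZB j).submatrix (es dA dM dB).symm (es dA dM dB).symm := by
        rw [kron_sub_left]
        ext p q
        simp [submatrix_apply, Matrix.sub_apply]
      rw [hds]
      exact psd_submatrix (kron_psd (hZAstep j hj) hZBj) _
    exact h2.trans (h3.le.trans h4) |>.trans (le_refl _)
  -- the chain
  have chain : ∀ k, k ≤ N → Φ k ≤ Φ 0 := by
    intro k
    induction k with
    | zero => intro _; exact le_rfl
    | succ k ih => intro hk; exact (step k (by omega)).trans (ih (by omega))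
  -- value of Φ 0
  have hΦ0 : Φ 0 = ZA 0 ⟨0, hdA⟩ ⟨0, hdA⟩ * ZB 0 ⟨0, hdB⟩ ⟨0, hdB⟩ := by
    simp only [hΦ]
    rw [hχ0, qf_basis]
    simp [tk, one_apply]
  -- value of Φ N
  set P := tk PA (1 : Matrix (Fin dM) (Fin dM) ℂ) (1 : Matrix (Fin dB) (Fin dB) ℂ)
    with hPdef
  have hPP : P * P = P := by
    rw [hPdef, tk_mul, hPA2, Matrix.one_mul, Matrix.one_mul]
  have hPh : Pᴴ = P := by
    rw [hPdef, tk_conjT, conjTranspose_one, conjTranspose_one, hPAh.eq]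
  have hQP : (tk (1 : Matrix (Fin dA) (Fin dA) ℂ) 1 PB).mulVec (χ N) = P.mulVec (χ N) :=
    hagree.symm
  have hΦN : Φ N = star (P.mulVec (χ N)) ⬝ᵥ (P.mulVec (χ N)) := by
    have e1 : tk PA (1 : Matrix (Fin dM) (Fin dM) ℂ) PB
        = P * tk (1 : Matrix (Fin dA) (Fin dA) ℂ) 1 PB := by
      rw [hPdef, tk_mul, Matrix.mul_one, Matrix.one_mul, Matrix.one_mul]
    have e2 := qf_conj (1 : Matrix (Fin dA × Fin dM × Fin dB) _ ℂ) P (χ N)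
    rw [Matrix.mul_one, hPh, hPP] at e2
    calc Φ N = qf (tk PA 1 PB) (χ N) := by simp only [hΦ, hZAN, hZBN]
      _ = star (χ N) ⬝ᵥ P.mulVec ((tk (1 : Matrix (Fin dA) (Fin dA) ℂ) 1 PB).mulVec (χ N)) := by
          rw [qf, e1, ← mulVec_mulVec]
      _ = star (χ N) ⬝ᵥ (P * P).mulVec (χ N) := by rw [hQP, mulVec_mulVec]
      _ = qf P (χ N) := by rw [hPP]; rfl
      _ = star (P.mulVec (χ N)) ⬝ᵥ (P.mulVec (χ N)) := by
          rw [e2]; simp [qf, one_mulVec]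
  -- diagonal entries are nonnegative reals
  have hA0 : 0 ≤ ZA 0 ⟨0, hdA⟩ ⟨0, hdA⟩ := by
    have h := (hZA 0 (by omega)).dotProduct_mulVec_nonneg (fun p => if p = ⟨0, hdA⟩ then 1 else 0)
    rwa [show (star _ ⬝ᵥ _) = ZA 0 ⟨0, hdA⟩ ⟨0, hdA⟩ from qf_basis _ _] at h
  have hB0 : 0 ≤ ZB 0 ⟨0, hdB⟩ ⟨0, hdB⟩ := by
    have h := (hZB 0 (by omega)).dotProduct_mulVec_nonneg (fun p => if p = ⟨0, hdB⟩ then 1 else 0)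
    rwa [show (star _ ⬝ᵥ _) = ZB 0 ⟨0, hdB⟩ ⟨0, hdB⟩ from qf_basis _ _] at h
  obtain ⟨hare, haim⟩ := Complex.nonneg_iff.mp hA0
  obtain ⟨hbre, hbim⟩ := Complex.nonneg_iff.mp hB0
  have hre : (Φ N).re ≤ (Φ 0).re := (Complex.le_def.mp (chain N le_rfl)).1
  have hΦ0re : (Φ 0).re = (ZA 0 ⟨0, hdA⟩ ⟨0, hdA⟩).re * (ZB 0 ⟨0, hdB⟩ ⟨0, hdB⟩).re := by
    rw [hΦ0, Complex.mul_re, ← haim, ← hbim]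
    ring
  rw [ge_iff_le, ← hΦN, ← hΦ0re]
  exact hre
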